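/- In the poset M(n) with n ≥ 2, an element A ⊆ [n] has exactly one element covered by it (i.e. |D(A)| = 1) and A ≠ ∅ if and only if A is a set of consecutive integers {j, j+1, ..., k} for some 1 ≤ j ≤ k ≤ n. -/

import Mathlib

/-- The `i`-th largest element of a finite set of naturals (`i = 0` gives the largest);
defaults to `0` out of range. -/
def kthLargest (A : Finset ℕ) (i : ℕ) : ℕ :=
  ((A.sort (· ≤ ·)).reverse).getD i 0

/-- The order on `M(n)`: for `A = {a_1 < ... < a_j}` and `B = {b_1 < ... < b_k}`,
`A ⪯ B` iff `j ≤ k` and the `i`-th largest element of `A` is at most the `i`-th largest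
element of `B` for all `0 ≤ i ≤ j - 1`. -/
def MLE (A B : Finset ℕ) : Prop :=
  A.card ≤ B.card ∧ ∀ i < A.card, kthLargest A i ≤ kthLargest B i

/-- Strict version of `MLE`. -/
def MLT (A B : Finset ℕ) : Prop := MLE A B ∧ A ≠ B

/-- The covering relation of the poset `M(n)` (subsets of `{1, ..., n}` ordered by `MLE`). -/
def MCovBy (n : ℕ) (A B : Finset ℕ) : Prop :=
  MLT A B ∧ ∀ C ⊆ Finset.Icc 1 n, ¬(MLT A C ∧ MLT C B)


namespace MAux

def F (A : Finset ℕ) (t : ℕ) : ℕ := (A.filter (fun a => t ≤ a)).card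

lemma F_anti (A : Finset ℕ) {s t : ℕ} (h : s ≤ t) : F A t ≤ F A s := by
  apply Finset.card_le_card
  intro a ha
  simp only [Finset.mem_filter] at ha ⊢
  exact ⟨ha.1, le_trans h ha.2⟩

lemma F_step (A : Finset ℕ) (t : ℕ) :
    F A t = F A (t + 1) + (if t ∈ A then 1 else 0) := by
  by_cases h : t ∈ A
  · have he : A.filter (fun a => t ≤ a) = insert t (A.filter (fun a => t + 1 ≤ a)) := by
      ext a
      simp only [Finset.mem_filter, Finset.mem_insert]
      constructor
      · rintro ⟨ha, hta⟩
        rcases eq_or_lt_of_le hta with h' | h'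
        · exact Or.inl h'.symm
        · exact Or.inr ⟨ha, h'⟩
      · rintro (rfl | ⟨ha, h'⟩)
        · exact ⟨h, le_refl _⟩
        · exact ⟨ha, by omega⟩
    rw [F, F, he, Finset.card_insert_of_notMem (by simp)]
    simp [h]
  · have he : A.filter (fun a => t ≤ a) = A.filter (fun a => t + 1 ≤ a) := by
      ext a
      simp only [Finset.mem_filter]
      constructor
      · rintro ⟨ha, hta⟩
        refine ⟨ha, ?_⟩
        rcases eq_or_lt_of_le hta with h' | h'
        · exact absurd (h' ▸ ha) h
        · omega
      · rintro ⟨ha, h'⟩; exact ⟨ha, by omega⟩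
    rw [F, F, he]
    simp [h]

lemma mem_iff_F {A : Finset ℕ} {t : ℕ} : t ∈ A ↔ F A (t + 1) < F A t := by
  have := F_step A t
  split_ifs at this with h
  · simp [h]; omega
  · simp [h]; omega

lemma F_ext {A B : Finset ℕ} (h0A : 0 ∉ A) (h0B : 0 ∉ B)
    (h : ∀ t, 1 ≤ t → F A t = F B t) : A = B := by
  ext a
  rcases Nat.eq_zero_or_pos a with rfl | ha
  · simp [h0A, h0B]
  · rw [mem_iff_F, mem_iff_F, h a ha, h (a + 1) (by omega)]

lemma F_insert {A : Finset ℕ} {x : ℕ} (hx : x ∉ A) (t : ℕ) :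
    F (insert x A) t = F A t + (if t ≤ x then 1 else 0) := by
  rw [F, F, Finset.filter_insert]
  split_ifs with h
  · rw [Finset.card_insert_of_notMem (by simp [hx])]
  · rfl

lemma F_erase {A : Finset ℕ} {x : ℕ} (hx : x ∈ A) (t : ℕ) :
    F (A.erase x) t + (if t ≤ x then 1 else 0) = F A t := by
  have h1 : insert x (A.erase x) = A := Finset.insert_erase hx
  have := F_insert (Finset.notMem_erase x A) t
  rw [h1] at this
  omega

lemma F_sum {n : ℕ} {A : Finset ℕ} (hA : A ⊆ Finset.Icc 1 n) :
    ∑ t ∈ Finset.Icc 1 n, F A t = ∑ a ∈ A, a := by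
  have h1 : ∀ t, F A t = ∑ a ∈ A, (if t ≤ a then 1 else 0) := by
    intro t
    rw [F, Finset.card_filter]
  calc ∑ t ∈ Finset.Icc 1 n, F A t
      = ∑ t ∈ Finset.Icc 1 n, ∑ a ∈ A, (if t ≤ a then 1 else 0) := by
        exact Finset.sum_congr rfl (fun t _ => h1 t)
    _ = ∑ a ∈ A, ∑ t ∈ Finset.Icc 1 n, (if t ≤ a then 1 else 0) := Finset.sum_comm
    _ = ∑ a ∈ A, a := by
        apply Finset.sum_congr rfl
        intro a ha
        have hab := hA ha
        simp only [Finset.mem_Icc] at hab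
        rw [← Finset.card_filter]
        have : (Finset.Icc 1 n).filter (fun t => t ≤ a) = Finset.Icc 1 a := by
          ext t
          simp only [Finset.mem_filter, Finset.mem_Icc]
          omega
        rw [this, Nat.card_Icc]
        omega


lemma F_zero (A : Finset ℕ) : F A 0 = A.card := by
  simp [F]

lemma F_le_card (A : Finset ℕ) (t : ℕ) : F A t ≤ A.card :=
  Finset.card_le_card (Finset.filter_subset _ _)

lemma F_one (A : Finset ℕ) (h0 : 0 ∉ A) : F A 1 = A.card := by
  rw [F]
  congr 1
  apply Finset.filter_true_of_mem
  intro a ha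
  rcases Nat.eq_zero_or_pos a with h | h
  · exact absurd (h ▸ ha) h0
  · exact h

lemma F_eq_zero {n : ℕ} {A : Finset ℕ} (hA : A ⊆ Finset.Icc 1 n) {t : ℕ} (ht : n < t) :
    F A t = 0 := by
  rw [F, Finset.card_eq_zero]
  apply Finset.filter_eq_empty_iff.mpr
  intro a ha
  have := hA ha
  simp only [Finset.mem_Icc] at this
  omega

lemma zero_not_mem {n : ℕ} {A : Finset ℕ} (hA : A ⊆ Finset.Icc 1 n) : 0 ∉ A := by
  intro h
  have := hA h
  simp at this

lemma countP_sort (A : Finset ℕ) (p : ℕ → Prop) [DecidablePred p] :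
    (A.sort (· ≤ ·)).countP (fun a => decide (p a)) = (A.filter p).card := by
  rw [(Finset.sort_perm_toList A (· ≤ ·)).countP_eq]
  have h1 : (A.filter p).card = Multiset.countP p A.1 := by
    simp [Finset.filter, Multiset.countP_eq_card_filter, Finset.card]
  have h2 : (A.toList : Multiset ℕ) = A.1 := by simp [Finset.toList]
  rw [h1, ← h2, Multiset.coe_countP]

lemma F_count (A : Finset ℕ) (t : ℕ) :
    ((A.sort (· ≤ ·)).reverse).countP (fun a => decide (t ≤ a)) = F A t := by
  rw [List.countP_reverse, countP_sort]
  rfl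

lemma rev_length (A : Finset ℕ) : ((A.sort (· ≤ ·)).reverse).length = A.card := by
  rw [List.length_reverse, Finset.length_sort]

lemma rev_sorted (A : Finset ℕ) : ((A.sort (· ≤ ·)).reverse).Pairwise (· ≥ ·) := by
  have h := Finset.pairwise_sort A (· ≤ ·)
  rw [List.pairwise_reverse]
  exact h

lemma kthLargest_eq (A : Finset ℕ) {i : ℕ} (hi : i < A.card) :
    kthLargest A i = ((A.sort (· ≤ ·)).reverse)[i]'(by rw [rev_length]; exact hi) := by
  rw [kthLargest, List.getD_eq_getElem]

lemma countP_ge (l : List ℕ) (t k : ℕ) (hk : k ≤ l.length)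
    (h : ∀ i, (hi : i < k) → t ≤ l[i]'(by omega)) :
    k ≤ l.countP (fun a => decide (t ≤ a)) := by
  have hsplit := List.take_append_drop k l
  have := List.countP_append (p := fun a => decide (t ≤ a)) (l₁ := l.take k) (l₂ := l.drop k)
  rw [hsplit] at this
  have htk : (l.take k).countP (fun a => decide (t ≤ a)) = k := by
    have hlen : (l.take k).length = k := by rw [List.length_take]; omega
    rw [List.countP_eq_length.mpr, hlen]
    intro a ha
    obtain ⟨i, hilt, rfl⟩ := List.mem_iff_getElem.mp ha
    rw [List.getElem_take]
    simp only [decide_eq_true_eq]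
    exact h i (by omega)
  omega

lemma countP_le {t : ℕ} (l : List ℕ) (hs : l.Pairwise (· ≥ ·)) {i : ℕ} (hi : i < l.length)
    (h : ¬ t ≤ l[i]) : l.countP (fun a => decide (t ≤ a)) ≤ i := by
  have hsplit := List.take_append_drop i l
  have hctot := List.countP_append (p := fun a => decide (t ≤ a)) (l₁ := l.take i) (l₂ := l.drop i)
  rw [hsplit] at hctot
  have h1 : (l.take i).countP (fun a => decide (t ≤ a)) ≤ i := by
    calc (l.take i).countP (fun a => decide (t ≤ a)) ≤ (l.take i).length :=
          List.countP_le_length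
      _ ≤ i := by rw [List.length_take]; omega
  have h2 : (l.drop i).countP (fun a => decide (t ≤ a)) = 0 := by
    rw [List.countP_eq_zero]
    intro a ha
    obtain ⟨j, hjlt, rfl⟩ := List.mem_iff_getElem.mp ha
    rw [List.getElem_drop]
    simp only [decide_eq_true_eq, not_le] at h ⊢
    have : l[i + j]'(by simp at hjlt; omega) ≤ l[i] := by
      rcases Nat.eq_zero_or_pos j with rfl | hj
      · simp
      · exact hs.rel_get_of_lt (a := ⟨i, hi⟩) (b := ⟨i + j, by simp at hjlt; omega⟩) (by simp; omega)
    omega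
  omega

lemma countP_iff (l : List ℕ) (hs : l.Pairwise (· ≥ ·)) {i : ℕ} (hi : i < l.length) (t : ℕ) :
    t ≤ l[i] ↔ i < l.countP (fun a => decide (t ≤ a)) := by
  constructor
  · intro h
    apply countP_ge l t (i + 1) (by omega)
    intro j hj
    have hji : j ≤ i := by omega
    have hij : l[i] ≤ l[j]'(by omega) := by
      rcases eq_or_lt_of_le hji with rfl | hlt
      · exact le_refl _
      · have := hs.rel_get_of_lt (a := ⟨j, by omega⟩) (b := ⟨i, hi⟩)
          (by simp only [Fin.mk_lt_mk]; omega)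
        simpa using this
    exact le_trans h hij
  · intro h
    by_contra hc
    have := countP_le l hs hi hc
    omega

lemma MLE_iff (A B : Finset ℕ) : MLE A B ↔ ∀ t, F A t ≤ F B t := by
  constructor
  · rintro ⟨hcard, hk⟩ t
    rw [← F_count, ← F_count]
    apply countP_ge _ t (((A.sort (· ≤ ·)).reverse).countP (fun a => decide (t ≤ a)))
    · intro i hic
      have hcle : ((A.sort (· ≤ ·)).reverse).countP (fun a => decide (t ≤ a)) ≤ A.card := by
        rw [F_count]; exact F_le_card A t
      have hiA : i < ((A.sort (· ≤ ·)).reverse).length := by rw [rev_length]; omega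
      have hiB : i < ((B.sort (· ≤ ·)).reverse).length := by rw [rev_length]; omega
      have h1 : t ≤ ((A.sort (· ≤ ·)).reverse)[i] :=
        (countP_iff _ (rev_sorted A) hiA t).mpr (by omega)
      have h2 := hk i (by omega)
      rw [kthLargest_eq A (by omega), kthLargest_eq B (by omega)] at h2
      exact le_trans h1 h2
    · rw [rev_length]
      calc ((A.sort (· ≤ ·)).reverse).countP (fun a => decide (t ≤ a)) = F A t := F_count A t
        _ ≤ A.card := F_le_card A t
        _ ≤ B.card := hcard
  · intro h
    have hcard : A.card ≤ B.card := by
      have := h 0; rwa [F_zero, F_zero] at this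
    refine ⟨hcard, fun i hi => ?_⟩
    rw [kthLargest_eq A hi, kthLargest_eq B (by omega)]
    have hiA : i < ((A.sort (· ≤ ·)).reverse).length := by rw [rev_length]; omega
    have hiB : i < ((B.sort (· ≤ ·)).reverse).length := by rw [rev_length]; omega
    apply (countP_iff _ (rev_sorted B) hiB _).mpr
    have h1 : i < ((A.sort (· ≤ ·)).reverse).countP
        (fun a => decide (((A.sort (· ≤ ·)).reverse)[i] ≤ a)) :=
      (countP_iff _ (rev_sorted A) hiA _).mp (le_refl _)
    rw [F_count] at h1 ⊢
    exact lt_of_lt_of_le h1 (h _)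

lemma F_eq_onIcc {n : ℕ} {A B : Finset ℕ} (hA : A ⊆ Finset.Icc 1 n) (hB : B ⊆ Finset.Icc 1 n)
    (h : ∀ t ∈ Finset.Icc 1 n, F B t = F A t) : B = A := by
  apply F_ext (zero_not_mem hB) (zero_not_mem hA)
  intro t ht
  by_cases htn : t ≤ n
  · exact h t (by simp [Finset.mem_Icc]; omega)
  · rw [F_eq_zero hB (by omega), F_eq_zero hA (by omega)]

lemma exists_lt_F {n : ℕ} {A B : Finset ℕ} (hA : A ⊆ Finset.Icc 1 n) (hB : B ⊆ Finset.Icc 1 n)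
    (hle : ∀ t, F B t ≤ F A t) (hne : B ≠ A) :
    ∃ t ∈ Finset.Icc 1 n, F B t < F A t := by
  by_contra hc
  push_neg at hc
  exact hne (F_eq_onIcc hA hB (fun t ht => le_antisymm (hle t) (hc t ht)))

lemma sum_lt {n : ℕ} {A B : Finset ℕ} (hA : A ⊆ Finset.Icc 1 n) (hB : B ⊆ Finset.Icc 1 n)
    (hle : ∀ t, F B t ≤ F A t) (hne : B ≠ A) :
    ∑ b ∈ B, b < ∑ a ∈ A, a := by
  rw [← F_sum hA, ← F_sum hB]
  obtain ⟨t0, ht0, hlt⟩ := exists_lt_F hA hB hle hne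
  exact Finset.sum_lt_sum (fun t _ => hle t) ⟨t0, ht0, hlt⟩

lemma mgrade {n : ℕ} {A B : Finset ℕ} (hA : A ⊆ Finset.Icc 1 n) (hB : B ⊆ Finset.Icc 1 n)
    (hle : ∀ t, F B t ≤ F A t) (hne : B ≠ A) :
    ∃ C, C ⊆ Finset.Icc 1 n ∧ (∀ t, F B t ≤ F C t) ∧ (∀ t, F C t ≤ F A t) ∧
      ∑ c ∈ C, c = (∑ b ∈ B, b) + 1 := by
  classical
  obtain ⟨t, ht1, htn, htlt, htmax'⟩ :
      ∃ t, 1 ≤ t ∧ t ≤ n ∧ F B t < F A t ∧ ∀ s, 1 ≤ s → s ≤ n → F B s < F A s → s ≤ t := by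
    have hSne : ((Finset.Icc 1 n).filter (fun t => F B t < F A t)).Nonempty := by
      obtain ⟨t0, ht0, hlt⟩ := exists_lt_F hA hB hle hne
      exact ⟨t0, by simp only [Finset.mem_filter]; exact ⟨ht0, hlt⟩⟩
    have hmem := Finset.max'_mem _ hSne
    simp only [Finset.mem_filter, Finset.mem_Icc] at hmem
    refine ⟨((Finset.Icc 1 n).filter (fun t => F B t < F A t)).max' hSne,
      hmem.1.1, hmem.1.2, hmem.2, ?_⟩
    intro s hs1 hsn hlt'
    exact Finset.le_max' _ s (by
      simp only [Finset.mem_filter, Finset.mem_Icc]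
      exact ⟨⟨hs1, hsn⟩, hlt'⟩)
  have htmax : ∀ s, t < s → F B s = F A s := by
    intro s hs
    by_cases hsn : s ≤ n
    · by_contra hc
      have := htmax' s (by omega) hsn (lt_of_le_of_ne (hle s) hc)
      omega
    · rw [F_eq_zero hB (by omega), F_eq_zero hA (by omega)]
  have heq1 : F B (t + 1) = F A (t + 1) := htmax (t + 1) (by omega)
  have htA : t ∈ A := by
    rw [mem_iff_F]
    have := F_anti B (show t ≤ t + 1 by omega)
    omega
  have hFA : F A t = F A (t + 1) + 1 := by
    have := F_step A t
    simp [htA] at this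
    omega
  have htB : t ∉ B := by
    intro hc
    rw [mem_iff_F] at hc
    omega
  by_cases hP : ((B.filter (fun b => b < t)).Nonempty)
  · obtain ⟨u, huB, hut, humax⟩ :
        ∃ u, u ∈ B ∧ u < t ∧ ∀ b ∈ B, b < t → b ≤ u := by
      refine ⟨(B.filter (fun b => b < t)).max' hP, ?_, ?_, ?_⟩
      · have := (B.filter (fun b => b < t)).max'_mem hP
        simp only [Finset.mem_filter] at this
        exact this.1
      · have := (B.filter (fun b => b < t)).max'_mem hP
        simp only [Finset.mem_filter] at this
        exact this.2
      · intro b hb hbt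
        exact (B.filter (fun b => b < t)).le_max' b (by simp [Finset.mem_filter, hb, hbt])
    have hu1B : u + 1 ∉ B := by
      intro hc
      rcases lt_trichotomy (u + 1) t with h' | h' | h'
      · have := humax (u + 1) hc h'; omega
      · exact htB (h' ▸ hc)
      · omega
    refine ⟨insert (u + 1) (B.erase u), ?_, ?_, ?_, ?_⟩
    · intro x hx
      rcases Finset.mem_insert.mp hx with rfl | hx'
      · simp [Finset.mem_Icc]; omega
      · exact hB (Finset.mem_of_mem_erase hx')
    · intro s
      have h1 := F_insert (show u + 1 ∉ B.erase u by
        intro hc; exact hu1B (Finset.mem_of_mem_erase hc)) s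
      have h2 := F_erase huB s
      rw [h1]
      split_ifs at h2 ⊢ <;> omega
    · intro s
      have h1 := F_insert (show u + 1 ∉ B.erase u by
        intro hc; exact hu1B (Finset.mem_of_mem_erase hc)) s
      have h2 := F_erase huB s
      by_cases hs : s = u + 1
      · subst hs
        have key : F B (u + 1) = F B (t + 1) := by
          unfold F
          congr 1
          ext b
          simp only [Finset.mem_filter]
          constructor
          · rintro ⟨hb, hub⟩
            refine ⟨hb, ?_⟩
            by_contra hbt
            have hblt : b < t ∨ b = t := by omega
            rcases hblt with h' | rfl
            · have := humax b hb h'; omega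
            · exact htB hb
          · rintro ⟨hb, hub⟩; exact ⟨hb, by omega⟩
        have hFAu : F A t ≤ F A (u + 1) := F_anti A (by omega)
        rw [h1]
        split_ifs at h2 ⊢ <;> omega
      · rw [h1]
        have h3 := hle s
        split_ifs at h2 ⊢ <;> omega
    · rw [Finset.sum_insert (show u + 1 ∉ B.erase u by
        intro hc; exact hu1B (Finset.mem_of_mem_erase hc))]
      have := Finset.sum_erase_add B id huB
      simp only [id] at this
      omega
  · have hall : ∀ b ∈ B, t + 1 ≤ b := by
      intro b hb
      by_contra hc
      have hbt : b < t ∨ b = t := by omega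
      rcases hbt with h' | rfl
      · exact hP ⟨b, by simp [Finset.mem_filter, hb, h']⟩
      · exact htB hb
    have h1B : 1 ∉ B := by
      intro hc
      have := hall 1 hc
      omega
    refine ⟨insert 1 B, ?_, ?_, ?_, ?_⟩
    · intro x hx
      rcases Finset.mem_insert.mp hx with rfl | hx'
      · simp [Finset.mem_Icc]; omega
      · exact hB hx'
    · intro s
      rw [F_insert h1B s]
      omega
    · intro s
      rw [F_insert h1B s]
      by_cases hs : s ≤ 1
      · have key : F B s = F B (t + 1) := by
          unfold F
          congr 1
          ext b
          simp only [Finset.mem_filter]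
          exact ⟨fun ⟨hb, _⟩ => ⟨hb, hall b hb⟩, fun ⟨hb, hub⟩ => ⟨hb, by omega⟩⟩
        have hFAs : F A t ≤ F A s := F_anti A (by omega)
        simp only [if_pos hs]
        omega
      · simp only [if_neg hs, add_zero]
        exact hle s
    · rw [Finset.sum_insert h1B]
      omega

lemma mcovby_iff {n : ℕ} {A B : Finset ℕ} (hA : A ⊆ Finset.Icc 1 n) (hB : B ⊆ Finset.Icc 1 n) :
    MCovBy n B A ↔ (∀ t, F B t ≤ F A t) ∧ B ≠ A ∧ (∑ b ∈ B, b) + 1 = ∑ a ∈ A, a := by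
  constructor
  · rintro ⟨⟨hmle, hne⟩, hcov⟩
    have hle := (MLE_iff B A).mp hmle
    refine ⟨hle, hne, ?_⟩
    obtain ⟨C, hCsub, hBC, hCA, hCsum⟩ := mgrade hA hB hle hne
    by_cases hCA' : C = A
    · rw [← hCA', hCsum]
    · exfalso
      apply hcov C hCsub
      have hBC' : B ≠ C := by
        intro h
        rw [← h] at hCsum
        omega
      exact ⟨⟨(MLE_iff B C).mpr hBC, hBC'⟩, ⟨(MLE_iff C A).mpr hCA, hCA'⟩⟩
  · rintro ⟨hle, hne, hsum⟩
    refine ⟨⟨(MLE_iff B A).mpr hle, hne⟩, ?_⟩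
    rintro C hC ⟨⟨hmle1, hne1⟩, ⟨hmle2, hne2⟩⟩
    have h1 := sum_lt hC hB ((MLE_iff B C).mp hmle1) hne1
    have h2 := sum_lt hA hC ((MLE_iff C A).mp hmle2) hne2
    omega

def stepSet (A : Finset ℕ) (a : ℕ) : Finset ℕ :=
  if a = 1 then A.erase 1 else insert (a - 1) (A.erase a)

lemma stepSet_subset {n : ℕ} {A : Finset ℕ} (hA : A ⊆ Finset.Icc 1 n) {a : ℕ} (ha : a ∈ A) :
    stepSet A a ⊆ Finset.Icc 1 n := by
  have ha' := hA ha
  simp only [Finset.mem_Icc] at ha'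
  rw [stepSet]
  split_ifs with h
  · exact fun x hx => hA (Finset.mem_of_mem_erase hx)
  · intro x hx
    rcases Finset.mem_insert.mp hx with rfl | hx'
    · simp only [Finset.mem_Icc]; omega
    · exact hA (Finset.mem_of_mem_erase hx')

lemma F_stepSet {A : Finset ℕ} {a : ℕ} (h0 : 0 ∉ A) (ha : a ∈ A) (ha' : a - 1 ∉ A)
    {t : ℕ} (ht : 1 ≤ t) :
    F (stepSet A a) t + (if t = a then 1 else 0) = F A t := by
  have ha1 : 1 ≤ a := by
    rcases Nat.eq_zero_or_pos a with rfl | h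
    · exact absurd ha h0
    · exact h
  by_cases h : a = 1
  · rw [stepSet, if_pos h]
    subst h
    have := F_erase ha t
    split_ifs at this ⊢ <;> omega
  · rw [stepSet, if_neg h]
    have ha2 : 2 ≤ a := by omega
    have hnm : a - 1 ∉ A.erase a := fun hc => ha' (Finset.mem_of_mem_erase hc)
    rw [F_insert hnm t]
    have h2 := F_erase ha t
    split_ifs at h2 ⊢ <;> omega

lemma sum_stepSet {A : Finset ℕ} {a : ℕ} (h0 : 0 ∉ A) (ha : a ∈ A) (ha' : a - 1 ∉ A) :
    (∑ x ∈ stepSet A a, x) + 1 = ∑ x ∈ A, x := by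
  have ha1 : 1 ≤ a := by
    rcases Nat.eq_zero_or_pos a with rfl | h
    · exact absurd ha h0
    · exact h
  have herase := Finset.sum_erase_add A id ha
  simp only [id] at herase
  rw [stepSet]
  split_ifs with h
  · subst h; omega
  · have hnm : a - 1 ∉ A.erase a := fun hc => ha' (Finset.mem_of_mem_erase hc)
    rw [Finset.sum_insert hnm]
    omega

lemma card_stepSet_le {A : Finset ℕ} {a : ℕ} (ha : a ∈ A) (ha' : a - 1 ∉ A) :
    (stepSet A a).card ≤ A.card := by
  rw [stepSet]
  split_ifs with h
  · exact Finset.card_le_card (Finset.erase_subset _ _)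
  · rw [Finset.card_insert_of_notMem (fun hc => ha' (Finset.mem_of_mem_erase hc)),
      Finset.card_erase_of_mem ha]
    have : 1 ≤ A.card := Finset.card_pos.mpr ⟨a, ha⟩
    omega

lemma self_not_mem_stepSet {A : Finset ℕ} {a : ℕ} (h0 : 0 ∉ A) (ha : a ∈ A) :
    a ∉ stepSet A a := by
  have ha1 : 1 ≤ a := by
    rcases Nat.eq_zero_or_pos a with rfl | h
    · exact absurd ha h0
    · exact h
  rw [stepSet]
  split_ifs with h
  · subst h; exact Finset.notMem_erase 1 A
  · intro hc
    rcases Finset.mem_insert.mp hc with h1 | h1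
    · omega
    · exact (Finset.notMem_erase a A) h1

lemma cover_char {n : ℕ} {A B : Finset ℕ} (hA : A ⊆ Finset.Icc 1 n) (hB : B ⊆ Finset.Icc 1 n) :
    MCovBy n B A ↔ ∃ a, (a ∈ A ∧ a - 1 ∉ A) ∧ B = stepSet A a := by
  rw [mcovby_iff hA hB]
  constructor
  · rintro ⟨hle, hne, hsum⟩
    -- find the unique t0 where F differs
    have hsumF : (∑ t ∈ Finset.Icc 1 n, F B t) + 1 = ∑ t ∈ Finset.Icc 1 n, F A t := by
      rw [F_sum hA, F_sum hB]; exact hsum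
    have hex : ∃ t0 ∈ Finset.Icc 1 n, F B t0 < F A t0 := by
      by_contra hc
      push_neg at hc
      have : ∑ t ∈ Finset.Icc 1 n, F B t = ∑ t ∈ Finset.Icc 1 n, F A t :=
        Finset.sum_congr rfl (fun t ht => le_antisymm (hle t) (hc t ht))
      omega
    obtain ⟨t0, ht0mem, ht0lt⟩ := hex
    have hsplitA : F A t0 + ∑ t ∈ (Finset.Icc 1 n).erase t0, F A t
        = ∑ t ∈ Finset.Icc 1 n, F A t := Finset.add_sum_erase _ _ ht0mem
    have hsplitB : F B t0 + ∑ t ∈ (Finset.Icc 1 n).erase t0, F B t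
        = ∑ t ∈ Finset.Icc 1 n, F B t := Finset.add_sum_erase _ _ ht0mem
    have herasele : ∑ t ∈ (Finset.Icc 1 n).erase t0, F B t ≤
        ∑ t ∈ (Finset.Icc 1 n).erase t0, F A t :=
      Finset.sum_le_sum (fun t _ => hle t)
    have ht0eq : F A t0 = F B t0 + 1 := by omega
    have heraseeq : ∑ t ∈ (Finset.Icc 1 n).erase t0, F B t =
        ∑ t ∈ (Finset.Icc 1 n).erase t0, F A t := by omega
    have hpt : ∀ t ∈ (Finset.Icc 1 n).erase t0, F B t = F A t := by
      intro t ht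
      exact ((Finset.sum_eq_sum_iff_of_le (fun t _ => hle t)).mp heraseeq t ht)
    simp only [Finset.mem_Icc] at ht0mem
    have heqall : ∀ s, 1 ≤ s → s ≠ t0 → F B s = F A s := by
      intro s hs1 hsne
      by_cases hsn : s ≤ n
      · exact hpt s (by simp only [Finset.mem_erase, Finset.mem_Icc]; exact ⟨hsne, hs1, hsn⟩)
      · rw [F_eq_zero hB (by omega), F_eq_zero hA (by omega)]
    have ht0A : t0 ∈ A := by
      rw [mem_iff_F]
      have h1 : F B (t0 + 1) = F A (t0 + 1) := heqall (t0 + 1) (by omega) (by omega)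
      have h2 : F B (t0 + 1) ≤ F B t0 := F_anti B (by omega)
      omega
    have ht0m1 : t0 - 1 ∉ A := by
      rcases Nat.lt_or_ge t0 2 with h2 | h2
      · have : t0 - 1 = 0 := by omega
        rw [this]
        exact zero_not_mem hA
      · intro hc
        rw [mem_iff_F] at hc
        have he1 : F B (t0 - 1) = F A (t0 - 1) := heqall (t0 - 1) (by omega) (by omega)
        have he2 : t0 - 1 + 1 = t0 := by omega
        rw [he2] at hc
        have h3 := F_step B (t0 - 1)
        rw [he2] at h3
        split_ifs at h3 <;> omega
    refine ⟨t0, ⟨ht0A, ht0m1⟩, ?_⟩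
    apply F_ext (zero_not_mem hB) (zero_not_mem (stepSet_subset hA ht0A))
    intro t ht
    have hstep := F_stepSet (zero_not_mem hA) ht0A ht0m1 ht
    by_cases hteq : t = t0
    · subst hteq
      simp at hstep
      omega
    · simp only [if_neg hteq] at hstep
      rw [heqall t ht hteq]
      omega
  · rintro ⟨a, ⟨ha, ha'⟩, rfl⟩
    have h0A := zero_not_mem hA
    refine ⟨?_, ?_, ?_⟩
    · intro t
      rcases Nat.eq_zero_or_pos t with rfl | ht
      · rw [F_zero, F_zero]
        exact card_stepSet_le ha ha'
      · have := F_stepSet h0A ha ha' ht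
        split_ifs at this <;> omega
    · intro hc
      exact self_not_mem_stepSet h0A ha (by rw [hc]; exact ha)
    · exact sum_stepSet h0A ha ha'

lemma stepSet_inj {A : Finset ℕ} (h0 : 0 ∉ A) {a b : ℕ} (ha : a ∈ A) (hb : b ∈ A)
    (ha' : a - 1 ∉ A) (hb' : b - 1 ∉ A) (h : stepSet A a = stepSet A b) : a = b := by
  by_contra hne
  have hbmem : b ∈ stepSet A a := by
    rw [stepSet]
    split_ifs with h1
    · exact Finset.mem_erase.mpr ⟨fun hc => hne (h1.trans hc.symm), hb⟩
    · exact Finset.mem_insert.mpr (Or.inr (Finset.mem_erase.mpr ⟨fun hc => hne hc.symm, hb⟩))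
  rw [h] at hbmem
  exact self_not_mem_stepSet h0 hb hbmem

lemma interval_iff {n : ℕ} {A : Finset ℕ} (hA : A ⊆ Finset.Icc 1 n) :
    ((∃! a, a ∈ A ∧ a - 1 ∉ A) ∧ A ≠ ∅) ↔
      ∃ j k : ℕ, 1 ≤ j ∧ j ≤ k ∧ k ≤ n ∧ A = Finset.Icc j k := by
  constructor
  · rintro ⟨⟨a, ⟨haA, ha'⟩, huniq⟩, hne⟩
    have hAne : A.Nonempty := Finset.nonempty_iff_ne_empty.mpr hne
    set j := A.min' hAne with hj
    set k := A.max' hAne with hk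
    have hjA : j ∈ A := A.min'_mem hAne
    have hkA : k ∈ A := A.max'_mem hAne
    have hjk : j ≤ k := A.min'_le k hkA
    have hj1 : 1 ≤ j := by
      have := hA hjA; simp only [Finset.mem_Icc] at this; exact this.1
    have hkn : k ≤ n := by
      have := hA hkA; simp only [Finset.mem_Icc] at this; exact this.2
    have hjm1 : j - 1 ∉ A := by
      intro hc
      have := A.min'_le _ hc
      omega
    have haj : a = j := (huniq j ⟨hjA, hjm1⟩).symm
    refine ⟨j, k, hj1, hjk, hkn, ?_⟩
    have hdown : ∀ d, j ≤ k - d → (k - d) ∈ A := by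
      intro d
      induction d with
      | zero => intro _; simpa using hkA
      | succ d ih =>
        intro hd
        have hd' : j ≤ k - d := by omega
        have hmem := ih hd'
        have hne' : k - d ≠ j := by omega
        have : k - d - 1 ∈ A := by
          by_contra hc
          have := huniq (k - d) ⟨hmem, hc⟩
          omega
        have heq : k - d - 1 = k - (d + 1) := by omega
        rwa [heq] at this
    ext x
    simp only [Finset.mem_Icc]
    constructor
    · intro hx
      exact ⟨A.min'_le x hx, A.le_max' x hx⟩
    · rintro ⟨hx1, hx2⟩
      have h1 : k - (k - x) = x := by omega
      have h2 := hdown (k - x) (by omega)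
      rwa [h1] at h2
  · rintro ⟨j, k, hj1, hjk, hkn, rfl⟩
    constructor
    · refine ⟨j, ⟨by simp [Finset.mem_Icc]; omega, by simp [Finset.mem_Icc]; omega⟩, ?_⟩
      rintro a ⟨haA, ha'⟩
      simp only [Finset.mem_Icc] at haA ha'
      omega
    · intro hc
      have : j ∈ Finset.Icc j k := by simp [Finset.mem_Icc]; omega
      rw [hc] at this
      simp at this

end MAux

open MAux in
/-- In `M(n)` with `n ≥ 2`, an element `A ⊆ [n]` covers exactly one element and is
nonempty if and only if `A` is a set of consecutive integers `{j, j+1, ..., k}`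
for some `1 ≤ j ≤ k ≤ n`. -/
theorem unique_covered_iff_consecutive (n : ℕ) (hn : 2 ≤ n)
    (A : Finset ℕ) (hA : A ⊆ Finset.Icc 1 n) :
    ((∃! B : Finset ℕ, B ⊆ Finset.Icc 1 n ∧ MCovBy n B A) ∧ A ≠ ∅) ↔
      ∃ j k : ℕ, 1 ≤ j ∧ j ≤ k ∧ k ≤ n ∧ A = Finset.Icc j k := by
  rw [← interval_iff hA]
  have h0A := zero_not_mem hA
  constructor
  · rintro ⟨⟨B, ⟨hBsub, hBcov⟩, hBuniq⟩, hne⟩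
    refine ⟨?_, hne⟩
    obtain ⟨a, ⟨haA, ha'⟩, hBa⟩ := (cover_char hA hBsub).mp hBcov
    refine ⟨a, ⟨haA, ha'⟩, ?_⟩
    rintro b ⟨hbA, hb'⟩
    have hstep : stepSet A b ⊆ Finset.Icc 1 n := stepSet_subset hA hbA
    have hcov' : MCovBy n (stepSet A b) A :=
      (cover_char hA hstep).mpr ⟨b, ⟨hbA, hb'⟩, rfl⟩
    have := hBuniq (stepSet A b) ⟨hstep, hcov'⟩
    exact stepSet_inj h0A hbA haA hb' ha' (this.trans hBa)
  · rintro ⟨⟨a, ⟨haA, ha'⟩, huniq⟩, hne⟩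
    refine ⟨⟨stepSet A a, ⟨stepSet_subset hA haA, ?_⟩, ?_⟩, hne⟩
    · exact (cover_char hA (stepSet_subset hA haA)).mpr ⟨a, ⟨haA, ha'⟩, rfl⟩
    · rintro B ⟨hBsub, hBcov⟩
      obtain ⟨b, ⟨hbA, hb'⟩, hBb⟩ := (cover_char hA hBsub).mp hBcov
      rw [hBb, huniq b ⟨hbA, hb'⟩]
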